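/- Let Γ ⊂ ℂ be a compact subset of the closed disc of radius 1/2 centered at 0, let μ be a complex Borel measure on Γ with μ(Γ) = 1, and let F : Γ → ℂ be continuous. Suppose for all m, n ∈ ℕ: ∫ zⁿ conj(z)ᵐ |F(z)|² dμ(z) = (∫ zⁿ F(z) dμ(z))·(∫ conj(z)ᵐ conj(F(z)) dμ(z)). Then for every bounded holomorphic f on the unit disc 𝔻, the function z ↦ ∫_Γ f(w)·K(z,w) |F(w)|² dμ(w) (with K the Bergman kernel of 𝔻) lies in the one-dimensional span of the function z ↦ ∫_Γ K(z,w)·conj(F(w)) dμ(w); i.e., the Toeplitz operator with symbol |F|²μ has rank at most 1. -/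

import Mathlib

open MeasureTheory Complex
open scoped NNReal ENNReal

private lemma geom2 {q : ℂ} (hq : ‖q‖ < 1) :
    HasSum (fun m : ℕ => ((m : ℂ) + 1) * q ^ m) (((1 - q) ^ 2)⁻¹) := by
  have h1 : (1 : ℂ) - q ≠ 0 := sub_ne_zero.mpr (by rintro rfl; simp at hq)
  have h2 := (hasSum_coe_mul_geometric_of_norm_lt_one hq).add
    (hasSum_geometric_of_norm_lt_one hq)
  have heq : q / (1 - q) ^ 2 + (1 - q)⁻¹ = ((1 - q) ^ 2)⁻¹ := by
    field_simp
    ring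
  rw [heq] at h2
  have e : (fun m : ℕ => ((m : ℂ) + 1) * q ^ m)
      = fun b : ℕ => (b : ℂ) * q ^ b + q ^ b := funext fun m => by ring
  rw [e]; exact h2

private lemma summable_geom2 {t : ℝ} (ht : ‖t‖ < 1) :
    Summable (fun m : ℕ => ((m : ℝ) + 1) * t ^ m) := by
  have h1 := summable_pow_mul_geometric_of_norm_lt_one 1 ht
  have h2 := summable_geometric_of_norm_lt_one ht
  exact (h1.add h2).congr fun m => by ring

/-- If the measure `h • P` supported on a compact `Γ` inside the disc of
radius `1/2` has mass `1` and satisfies the covariance equation w.r.t. `F`,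
then the Toeplitz operator with symbol `|F|²μ` has rank at most 1: for every
bounded holomorphic `f` on `𝔻`, the transform of `f` is a scalar multiple of
`z ↦ ∫ K(z,w) conj(F(w)) dμ(w)`. -/
theorem stmt_11 (Γ : Set ℂ) (hΓ : IsCompact Γ)
    (hΓball : Γ ⊆ Metric.closedBall (0 : ℂ) (1 / 2))
    (P : Measure ℂ) [IsFiniteMeasure P] (h : ℂ → ℂ)
    (hmeas : Measurable h) (hnorm : ∀ z, ‖h z‖ = 1)
    (hsupp : P Γᶜ = 0)
    (hmass : ∫ z, h z ∂P = 1)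
    (F : ℂ → ℂ) (hF : ContinuousOn F Γ)
    (hcov : ∀ m n : ℕ,
      ∫ z, z ^ n * (starRingEnd ℂ) z ^ m * ((‖F z‖ ^ 2 : ℝ) : ℂ) * h z ∂P
        = (∫ z, z ^ n * F z * h z ∂P) *
            ∫ z, (starRingEnd ℂ) z ^ m * (starRingEnd ℂ) (F z) * h z ∂P) :
    ∀ f : ℂ → ℂ, DifferentiableOn ℂ f (Metric.ball (0 : ℂ) 1) →
      (∃ C : ℝ, ∀ z ∈ Metric.ball (0 : ℂ) 1, ‖f z‖ ≤ C) →
      ∃ a : ℂ, ∀ z ∈ Metric.ball (0 : ℂ) 1,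
        ∫ w, f w * ((Real.pi : ℂ))⁻¹ * ((1 - z * (starRingEnd ℂ) w) ^ 2)⁻¹ *
            ((‖F w‖ ^ 2 : ℝ) : ℂ) * h w ∂P
          = a * ∫ w, ((Real.pi : ℂ))⁻¹ * ((1 - z * (starRingEnd ℂ) w) ^ 2)⁻¹ *
              (starRingEnd ℂ) (F w) * h w ∂P := by
  intro f hfdiff hfbdd
  clear hfbdd hmass
  -- basic facts
  obtain ⟨M, hM⟩ := hΓ.exists_bound_of_continuousOn hF
  set M0 : ℝ := max M 0 with hM0def
  have hM0' : ∀ w ∈ Γ, ‖F w‖ ≤ M0 := fun w hw => (hM w hw).trans (le_max_left _ _)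
  have hM0nn : 0 ≤ M0 := le_max_right _ _
  have hΓmeas : MeasurableSet Γ := hΓ.isClosed.measurableSet
  have haeΓ : ∀ᵐ w ∂P, w ∈ Γ := by
    rw [ae_iff]; simpa [Set.compl_def] using hsupp
  have hFm : AEStronglyMeasurable F P := by
    have h1 : AEStronglyMeasurable F (P.restrict Γ) := hF.aestronglyMeasurable hΓmeas
    rwa [Measure.restrict_eq_self_of_ae_mem haeΓ] at h1
  have hconjFm : AEStronglyMeasurable (fun w => (starRingEnd ℂ) (F w)) P :=
    Complex.continuous_conj.comp_aestronglyMeasurable hFm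
  have hnFm : AEStronglyMeasurable (fun w => ((‖F w‖ ^ 2 : ℝ) : ℂ)) P :=
    Complex.continuous_ofReal.comp_aestronglyMeasurable
      ((continuous_pow 2).comp_aestronglyMeasurable hFm.norm)
  have hhm : AEStronglyMeasurable h P := hmeas.aestronglyMeasurable
  have hconjpow : ∀ m : ℕ, AEStronglyMeasurable (fun w => (starRingEnd ℂ) w ^ m) P :=
    fun m => (Complex.continuous_conj.measurable.pow_const m).aestronglyMeasurable
  have hwball : ∀ w ∈ Γ, ‖w‖ ≤ 1 / 2 := by
    intro w hw
    simpa [Metric.mem_closedBall, dist_zero_right] using hΓball hw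
  set T : ℝ := (P Set.univ).toReal with hTdef
  have hTnn : (0 : ℝ) ≤ T := ENNReal.toReal_nonneg
  -- the key bounded-integral helper
  have key : ∀ (g : ℂ → ℂ) (C : ℝ), AEStronglyMeasurable g P → (∀ᵐ w ∂P, ‖g w‖ ≤ C) →
      Integrable g P ∧ ‖∫ w, g w ∂P‖ ≤ C * T := by
    intro g C hg hbC
    have hint : Integrable g P := (integrable_const C).mono' hg hbC
    refine ⟨hint, ?_⟩
    calc ‖∫ w, g w ∂P‖ ≤ ∫ w, ‖g w‖ ∂P := norm_integral_le_integral_norm _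
      _ ≤ ∫ _w, C ∂P := integral_mono_ae hint.norm (integrable_const _) hbC
      _ = C * T := by rw [integral_const, smul_eq_mul, mul_comm]; rfl
  -- the generic sum/integral swap
  have swap : ∀ (G : ℕ → ℂ → ℂ) (g : ℂ → ℂ) (b : ℕ → ℝ),
      (∀ m, AEStronglyMeasurable (G m) P) →
      (∀ m, ∀ᵐ w ∂P, ‖G m w‖ ≤ b m) → Summable b →
      (∀ᵐ w ∂P, HasSum (fun m => G m w) (g w)) →
      HasSum (fun m => ∫ w, G m w ∂P) (∫ w, g w ∂P) := by
    intro G g b hGm hGb hb hGsum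
    have hint : ∀ m, Integrable (G m) P :=
      fun m => (integrable_const (b m)).mono' (hGm m) (hGb m)
    have hnormsum : Summable (fun m => ∫ w, ‖G m w‖ ∂P) := by
      refine Summable.of_nonneg_of_le (fun m => integral_nonneg fun w => norm_nonneg _)
        (fun m => ?_) (hb.mul_right T)
      calc ∫ w, ‖G m w‖ ∂P ≤ ∫ _w, b m ∂P :=
            integral_mono_ae (hint m).norm (integrable_const _) (hGb m)
        _ = b m * T := by rw [integral_const, smul_eq_mul, mul_comm]; rfl
    have h1 := hasSum_integral_of_summable_integral_norm hint hnormsum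
    have h2 : ∫ w, (∑' m, G m w) ∂P = ∫ w, g w ∂P :=
      integral_congr_ae (hGsum.mono fun w hw => hw.tsum_eq)
    rwa [h2] at h1
  -- power series of f
  have hfd : DifferentiableOn ℂ f (Metric.closedBall 0 ((3/4 : ℝ≥0) : ℝ)) :=
    hfdiff.mono (Metric.closedBall_subset_ball (by norm_num))
  have hp : HasFPowerSeriesOnBall f (cauchyPowerSeries f 0 ((3/4 : ℝ≥0) : ℝ)) 0 ((3/4 : ℝ≥0)) :=
    hfd.hasFPowerSeriesOnBall (by norm_num)
  set p := cauchyPowerSeries f 0 ((3/4 : ℝ≥0) : ℝ) with hpdef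
  set c : ℕ → ℂ := fun n => p.coeff n with hcdef
  have hsum_c : Summable (fun n => ‖c n‖ * (1 / 2 : ℝ) ^ n) := by
    have hr : ((1/2 : ℝ≥0) : ℝ≥0∞) < p.radius :=
      lt_of_lt_of_le (ENNReal.coe_lt_coe.mpr (by rw [← NNReal.coe_lt_coe]; norm_num)) hp.r_le
    have := p.summable_norm_mul_pow hr
    simpa [FormalMultilinearSeries.norm_apply_eq_norm_coef] using this
  have hfsum : ∀ w ∈ Γ, HasSum (fun n => c n * w ^ n) (f w) := by
    intro w hw
    have hmem : w ∈ Metric.eball (0 : ℂ) ((3/4 : ℝ≥0) : ℝ≥0∞) := by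
      rw [Metric.emetric_ball_nnreal]
      simp only [Metric.mem_ball, dist_zero_right]
      calc ‖w‖ ≤ 1/2 := hwball w hw
        _ < ((3/4 : ℝ≥0) : ℝ) := by norm_num
    have h1 := hp.hasSum hmem
    have e : (fun n => p n fun _ => w) = fun n => c n * w ^ n := by
      funext n
      rw [FormalMultilinearSeries.apply_eq_pow_smul_coeff, smul_eq_mul]
      ring
    rw [e, zero_add] at h1
    exact h1
  -- moments
  set A : ℕ → ℂ := fun n => ∫ w, w ^ n * F w * h w ∂P with hAdef
  have hAint : ∀ n : ℕ, AEStronglyMeasurable (fun w => w ^ n * F w * h w) P :=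
    fun n => ((measurable_id.pow_const n).aestronglyMeasurable.mul hFm).mul hhm
  have hAbd : ∀ n : ℕ, ∀ᵐ w ∂P, ‖w ^ n * F w * h w‖ ≤ (1/2 : ℝ) ^ n * M0 := by
    intro n
    filter_upwards [haeΓ] with w hw
    rw [norm_mul, norm_mul, norm_pow, hnorm, mul_one]
    exact mul_le_mul (pow_le_pow_left₀ (norm_nonneg _) (hwball w hw) n)
      (hM0' w hw) (norm_nonneg _) (by positivity)
  have hAbound : ∀ n, ‖A n‖ ≤ (1/2 : ℝ) ^ n * M0 * T := by
    intro n
    rw [hAdef]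
    exact (key _ _ (hAint n) (hAbd n)).2
  have hsumcA : Summable (fun n => c n * A n) := by
    apply Summable.of_norm
    refine Summable.of_nonneg_of_le (fun n => norm_nonneg _) (fun n => ?_)
      (hsum_c.mul_right (M0 * T))
    rw [norm_mul]
    calc ‖c n‖ * ‖A n‖ ≤ ‖c n‖ * ((1/2 : ℝ) ^ n * M0 * T) := by
          gcongr
          exact hAbound n
      _ = ‖c n‖ * (1/2 : ℝ) ^ n * (M0 * T) := by ring
  refine ⟨∑' n, c n * A n, ?_⟩
  intro z hz
  have hznorm : ‖z‖ < 1 := by simpa [Metric.mem_ball, dist_zero_right] using hz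
  -- kernel facts
  have hqle : ∀ w ∈ Γ, ‖z * (starRingEnd ℂ) w‖ ≤ 1 / 2 := by
    intro w hw
    rw [norm_mul, RCLike.norm_conj]
    calc ‖z‖ * ‖w‖ ≤ 1 * (1/2) :=
          mul_le_mul hznorm.le (hwball w hw) (norm_nonneg _) zero_le_one
      _ = 1/2 := by norm_num
  have hKm : AEStronglyMeasurable (fun w => ((1 - z * (starRingEnd ℂ) w) ^ 2)⁻¹) P :=
    ((((Complex.continuous_conj.measurable.const_mul z).const_sub 1).pow_const 2).inv).aestronglyMeasurable
  have hKbound : ∀ w ∈ Γ, ‖((1 - z * (starRingEnd ℂ) w) ^ 2)⁻¹‖ ≤ 4 := by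
    intro w hw
    have h2 : (1 : ℝ)/2 ≤ ‖1 - z * (starRingEnd ℂ) w‖ := by
      have h3 := norm_sub_norm_le (1 : ℂ) (z * (starRingEnd ℂ) w)
      rw [norm_one] at h3
      have := hqle w hw
      linarith
    rw [norm_inv, norm_pow, show (4:ℝ) = (((1:ℝ)/2) ^ 2)⁻¹ by norm_num]
    exact inv_anti₀ (by norm_num) (pow_le_pow_left₀ (by norm_num) h2 2)
  have hKsum : ∀ w ∈ Γ, HasSum (fun m : ℕ => ((m:ℂ)+1) * z ^ m * (starRingEnd ℂ) w ^ m)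
      (((1 - z * (starRingEnd ℂ) w) ^ 2)⁻¹) := by
    intro w hw
    have hq : ‖z * (starRingEnd ℂ) w‖ < 1 := lt_of_le_of_lt (hqle w hw) (by norm_num)
    have h1 := geom2 hq
    have e : (fun m : ℕ => ((m:ℂ)+1) * (z * (starRingEnd ℂ) w) ^ m)
        = fun m : ℕ => ((m:ℂ)+1) * z ^ m * (starRingEnd ℂ) w ^ m :=
      funext fun m => by rw [mul_pow]; ring
    rw [e] at h1
    exact h1
  set t : ℝ := ‖z‖ / 2 with htdef
  have ht : ‖t‖ < 1 := by
    have h0 : (0:ℝ) ≤ t := htdef ▸ div_nonneg (norm_nonneg z) (by norm_num)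
    rw [Real.norm_eq_abs, _root_.abs_of_nonneg h0, htdef]
    linarith
  have htpow : ∀ m : ℕ, ‖z‖ ^ m * (1/2 : ℝ) ^ m = t ^ m := by
    intro m; rw [htdef, ← mul_pow, mul_one_div]
  have hm1 : ∀ m : ℕ, ‖((m:ℂ)+1)‖ = (m:ℝ)+1 := by
    intro m
    rw [show ((m:ℂ)+1) = ((m+1 : ℕ) : ℂ) by push_cast; ring, Complex.norm_natCast]
    push_cast; ring
  have hnFnorm : ∀ w : ℂ, ‖((‖F w‖ ^ 2 : ℝ) : ℂ)‖ = ‖F w‖ ^ 2 := fun w => by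
    rw [Complex.norm_real, Real.norm_eq_abs, _root_.abs_of_nonneg (sq_nonneg _)]
  set B : ℕ → ℂ := fun m => ∫ w, (starRingEnd ℂ) w ^ m * (starRingEnd ℂ) (F w) * h w ∂P
    with hBdef
  set S : ℂ := ∫ w, ((1 - z * (starRingEnd ℂ) w) ^ 2)⁻¹ * ((starRingEnd ℂ) (F w) * h w) ∂P
    with hSdef
  -- step 1 : sum of B-moments gives S
  have hBsum : HasSum (fun m : ℕ => ((m:ℂ)+1) * z ^ m * B m) S := by
    have h0 := swap
      (fun m w => ((m:ℂ)+1) * z ^ m *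
        ((starRingEnd ℂ) w ^ m * (starRingEnd ℂ) (F w) * h w))
      (fun w => ((1 - z * (starRingEnd ℂ) w) ^ 2)⁻¹ * ((starRingEnd ℂ) (F w) * h w))
      (fun m => ((m:ℝ)+1) * t ^ m * M0)
      (fun m => (((hconjpow m).mul hconjFm).mul hhm).const_mul _)
      (fun m => by
        filter_upwards [haeΓ] with w hw
        simp only [norm_mul, norm_pow, RCLike.norm_conj, hnorm, mul_one, hm1]
        calc ((m:ℝ)+1) * ‖z‖ ^ m * (‖w‖ ^ m * ‖F w‖)
            ≤ ((m:ℝ)+1) * ‖z‖ ^ m * ((1/2 : ℝ) ^ m * M0) := by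
              gcongr <;> first | positivity | exact hwball w hw | exact hM0' w hw
          _ = ((m:ℝ)+1) * t ^ m * M0 := by rw [← htpow m]; ring)
      ((summable_geom2 ht).mul_right M0)
      (by
        filter_upwards [haeΓ] with w hw
        have h1 := (hKsum w hw).mul_right ((starRingEnd ℂ) (F w) * h w)
        have e : (fun m : ℕ => ((m:ℂ)+1) * z ^ m * (starRingEnd ℂ) w ^ m *
              ((starRingEnd ℂ) (F w) * h w))
            = fun m : ℕ => ((m:ℂ)+1) * z ^ m *
              ((starRingEnd ℂ) w ^ m * (starRingEnd ℂ) (F w) * h w) :=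
          funext fun m => by ring
        rw [e] at h1
        exact h1)
    have e2 : (fun m : ℕ => ∫ w, ((m:ℂ)+1) * z ^ m *
          ((starRingEnd ℂ) w ^ m * (starRingEnd ℂ) (F w) * h w) ∂P)
        = fun m : ℕ => ((m:ℂ)+1) * z ^ m * B m := by
      funext m
      rw [integral_const_mul, hBdef]
    rw [e2] at h0
    exact h0
  -- step 2 : per-monomial identity
  have hAS : ∀ n : ℕ, (∫ w, w ^ n * ((1 - z * (starRingEnd ℂ) w) ^ 2)⁻¹ *
      ((‖F w‖ ^ 2 : ℝ) : ℂ) * h w ∂P) = A n * S := by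
    intro n
    have h0 := swap
      (fun m w => ((m:ℂ)+1) * z ^ m *
        (w ^ n * (starRingEnd ℂ) w ^ m * ((‖F w‖ ^ 2 : ℝ) : ℂ) * h w))
      (fun w => w ^ n * ((1 - z * (starRingEnd ℂ) w) ^ 2)⁻¹ *
        ((‖F w‖ ^ 2 : ℝ) : ℂ) * h w)
      (fun m => ((m:ℝ)+1) * t ^ m * ((1/2 : ℝ) ^ n * M0 ^ 2))
      (fun m => ((((measurable_id.pow_const n).aestronglyMeasurable.mul
        (hconjpow m)).mul hnFm).mul hhm).const_mul _)
      (fun m => by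
        filter_upwards [haeΓ] with w hw
        simp only [norm_mul, norm_pow, RCLike.norm_conj, hnorm, mul_one, hm1, hnFnorm]
        calc ((m:ℝ)+1) * ‖z‖ ^ m * (‖w‖ ^ n * ‖w‖ ^ m * ‖F w‖ ^ 2)
            ≤ ((m:ℝ)+1) * ‖z‖ ^ m * ((1/2:ℝ) ^ n * (1/2:ℝ) ^ m * M0 ^ 2) := by
              gcongr <;> first | positivity | exact hwball w hw | exact hM0' w hw
          _ = ((m:ℝ)+1) * t ^ m * ((1/2:ℝ) ^ n * M0 ^ 2) := by rw [← htpow m]; ring)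
      ((summable_geom2 ht).mul_right _)
      (by
        filter_upwards [haeΓ] with w hw
        have h1 := (hKsum w hw).mul_right (w ^ n * ((‖F w‖ ^ 2 : ℝ) : ℂ) * h w)
        have e : (fun m : ℕ => ((m:ℂ)+1) * z ^ m * (starRingEnd ℂ) w ^ m *
              (w ^ n * ((‖F w‖ ^ 2 : ℝ) : ℂ) * h w))
            = fun m : ℕ => ((m:ℂ)+1) * z ^ m *
              (w ^ n * (starRingEnd ℂ) w ^ m * ((‖F w‖ ^ 2 : ℝ) : ℂ) * h w) :=
          funext fun m => by ring
        rw [e] at h1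
        have hval : ((1 - z * (starRingEnd ℂ) w) ^ 2)⁻¹ *
              (w ^ n * ((‖F w‖ ^ 2 : ℝ) : ℂ) * h w)
            = w ^ n * ((1 - z * (starRingEnd ℂ) w) ^ 2)⁻¹ *
              ((‖F w‖ ^ 2 : ℝ) : ℂ) * h w := by ring
        rw [hval] at h1
        exact h1)
    have e2 : (fun m : ℕ => ∫ w, ((m:ℂ)+1) * z ^ m *
          (w ^ n * (starRingEnd ℂ) w ^ m * ((‖F w‖ ^ 2 : ℝ) : ℂ) * h w) ∂P)
        = fun m : ℕ => ((m:ℂ)+1) * z ^ m * (A n * B m) := by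
      funext m
      rw [integral_const_mul]
      congr 1
      have := hcov m n
      rw [hAdef, hBdef]
      exact this
    rw [e2] at h0
    have h6 := hBsum.mul_left (A n)
    have e3 : (fun m : ℕ => A n * (((m:ℂ)+1) * z ^ m * B m))
        = fun m : ℕ => ((m:ℂ)+1) * z ^ m * (A n * B m) := funext fun m => by ring
    rw [e3] at h6
    exact h0.unique h6
  -- step 3 : expansion of f
  have hfinal : (∫ w, f w * ((1 - z * (starRingEnd ℂ) w) ^ 2)⁻¹ *
      ((‖F w‖ ^ 2 : ℝ) : ℂ) * h w ∂P) = (∑' n, c n * A n) * S := by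
    have h0 := swap
      (fun n w => c n * (w ^ n * ((1 - z * (starRingEnd ℂ) w) ^ 2)⁻¹ *
        ((‖F w‖ ^ 2 : ℝ) : ℂ) * h w))
      (fun w => f w * ((1 - z * (starRingEnd ℂ) w) ^ 2)⁻¹ *
        ((‖F w‖ ^ 2 : ℝ) : ℂ) * h w)
      (fun n => ‖c n‖ * (1/2 : ℝ) ^ n * (4 * M0 ^ 2))
      (fun n => ((((measurable_id.pow_const n).aestronglyMeasurable.mul hKm).mul
        hnFm).mul hhm).const_mul _)
      (fun n => by
        filter_upwards [haeΓ] with w hw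
        simp only [norm_mul, norm_pow, hnorm, mul_one, hnFnorm]
        calc ‖c n‖ * (‖w‖ ^ n * ‖((1 - z * (starRingEnd ℂ) w) ^ 2)⁻¹‖ * ‖F w‖ ^ 2)
            ≤ ‖c n‖ * ((1/2:ℝ) ^ n * 4 * M0 ^ 2) := by
              gcongr <;> first | positivity | exact hwball w hw | exact hM0' w hw | exact hKbound w hw
          _ = ‖c n‖ * (1/2:ℝ) ^ n * (4 * M0 ^ 2) := by ring)
      (hsum_c.mul_right _)
      (by
        filter_upwards [haeΓ] with w hw
        have h1 := (hfsum w hw).mul_right (((1 - z * (starRingEnd ℂ) w) ^ 2)⁻¹ *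
          ((‖F w‖ ^ 2 : ℝ) : ℂ) * h w)
        have e : (fun n : ℕ => c n * w ^ n * (((1 - z * (starRingEnd ℂ) w) ^ 2)⁻¹ *
              ((‖F w‖ ^ 2 : ℝ) : ℂ) * h w))
            = fun n => c n * (w ^ n * ((1 - z * (starRingEnd ℂ) w) ^ 2)⁻¹ *
              ((‖F w‖ ^ 2 : ℝ) : ℂ) * h w) := funext fun n => by ring
        rw [e] at h1
        have hval : f w * (((1 - z * (starRingEnd ℂ) w) ^ 2)⁻¹ *
              ((‖F w‖ ^ 2 : ℝ) : ℂ) * h w)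
            = f w * ((1 - z * (starRingEnd ℂ) w) ^ 2)⁻¹ *
              ((‖F w‖ ^ 2 : ℝ) : ℂ) * h w := by ring
        rw [hval] at h1
        exact h1)
    have e2 : (fun n => ∫ w, c n * (w ^ n * ((1 - z * (starRingEnd ℂ) w) ^ 2)⁻¹ *
          ((‖F w‖ ^ 2 : ℝ) : ℂ) * h w) ∂P)
        = fun n => c n * (A n * S) := by
      funext n
      rw [integral_const_mul, hAS n]
    rw [e2] at h0
    have h6 := hsumcA.hasSum.mul_right S
    have e3 : (fun n => c n * A n * S) = fun n => c n * (A n * S) :=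
      funext fun n => by ring
    rw [e3] at h6
    exact h0.unique h6
  -- conclusion
  calc ∫ w, f w * ((Real.pi : ℂ))⁻¹ * ((1 - z * (starRingEnd ℂ) w) ^ 2)⁻¹ *
        ((‖F w‖ ^ 2 : ℝ) : ℂ) * h w ∂P
      = ∫ w, ((Real.pi : ℂ))⁻¹ * (f w * ((1 - z * (starRingEnd ℂ) w) ^ 2)⁻¹ *
        ((‖F w‖ ^ 2 : ℝ) : ℂ) * h w) ∂P :=
        integral_congr_ae (Filter.Eventually.of_forall fun w => by ring)
    _ = ((Real.pi : ℂ))⁻¹ * ((∑' n, c n * A n) * S) := by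
        rw [integral_const_mul, hfinal]
    _ = (∑' n, c n * A n) * (((Real.pi : ℂ))⁻¹ * S) := by ring
    _ = (∑' n, c n * A n) * ∫ w, ((Real.pi : ℂ))⁻¹ * ((1 - z * (starRingEnd ℂ) w) ^ 2)⁻¹ *
        (starRingEnd ℂ) (F w) * h w ∂P := by
        congr 1
        rw [hSdef, ← integral_const_mul]
        exact integral_congr_ae (Filter.Eventually.of_forall fun w => by ring)
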